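/- (Rhemtulla) A word w ∈ F_n satisfies G_w = G for every group G if and only if w ∈ x₁^{e₁}⋯x_n^{e_n} F_n' for integers e₁,…,e_n with gcd(e₁,…,e_n) = 1, where F_n' is the commutator subgroup of F_n. -/

import Mathlib

def wordImage {n : ℕ} (w : FreeGroup (Fin n)) (G : Type*) [Group G] : Set G :=
  Set.range fun f : Fin n → G => FreeGroup.lift f w

/-- The exponent-sum (abelianization) map on the free group. -/
noncomputable def expMap (n : ℕ) : FreeGroup (Fin n) →* Multiplicative (Fin n →₀ ℤ) :=
  FreeGroup.lift fun i => Multiplicative.ofAdd (Finsupp.single i 1)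

lemma expMap_of {n : ℕ} (i : Fin n) :
    expMap n (FreeGroup.of i) = Multiplicative.ofAdd (Finsupp.single i 1) := by
  simp [expMap]

lemma mem_commutator_of_expMap_eq_one {n : ℕ} (u : FreeGroup (Fin n))
    (h : expMap n u = 1) : u ∈ commutator (FreeGroup (Fin n)) := by
  let ψ : Multiplicative (Fin n →₀ ℤ) →* Abelianization (FreeGroup (Fin n)) :=
    AddMonoidHom.toMultiplicativeLeft
      (Finsupp.liftAddHom fun i =>
        zmultiplesHom _ (Additive.ofMul (Abelianization.of (FreeGroup.of i))))
  have hcomp : ψ.comp (expMap n) = Abelianization.of := by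
    apply FreeGroup.ext_hom
    intro i
    simp [ψ, expMap_of, AddMonoidHom.toMultiplicativeLeft]
  have key : Abelianization.of u = 1 := by
    rw [← hcomp]
    simp only [MonoidHom.comp_apply, h, map_one]
  exact (QuotientGroup.eq_one_iff u).mp key

lemma exists_bezout {ι : Type*} [DecidableEq ι] (s : Finset ι) (e : ι → ℤ) :
    ∃ c : ι → ℤ, ∑ i ∈ s, c i * e i = s.gcd e := by
  induction s using Finset.induction_on with
  | empty => exact ⟨0, by simp⟩
  | @insert a s ha ih =>
    obtain ⟨c, hc⟩ := ih
    set g := s.gcd e with hg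
    refine ⟨fun i => if i = a then Int.gcdA (e a) g
      else c i * Int.gcdB (e a) g, ?_⟩
    rw [Finset.sum_insert ha, Finset.gcd_insert]
    dsimp only
    rw [if_pos rfl]
    have h1 : ∑ i ∈ s, (if i = a then Int.gcdA (e a) g
        else c i * Int.gcdB (e a) g) * e i = (∑ i ∈ s, c i * e i) * Int.gcdB (e a) g := by
      rw [Finset.sum_mul]
      refine Finset.sum_congr rfl fun i hi => ?_
      rw [if_neg (by rintro rfl; exact ha hi)]
      ring
    rw [h1, hc, ← hg, ← Int.coe_gcd, Int.gcd_eq_gcd_ab]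
    ring

theorem surjective_on_all_groups_iff {n : ℕ} (w : FreeGroup (Fin n)) :
    (∀ (G : Type u) [Group G], wordImage w G = Set.univ) ↔
      ∃ e : Fin n → ℤ, Finset.gcd Finset.univ e = 1 ∧
        (((List.finRange n).map fun i => FreeGroup.of i ^ e i).prod)⁻¹ * w ∈
          commutator (FreeGroup (Fin n)) := by
  constructor
  · intro h
    set e : Fin n → ℤ := fun i => (expMap n w).toAdd i with he
    refine ⟨e, ?_, ?_⟩
    · -- gcd = 1, using surjectivity on ULift (Multiplicative ℤ)
      have h1 := h (ULift (Multiplicative ℤ))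
      rw [Set.eq_univ_iff_forall] at h1
      obtain ⟨f, hf⟩ := h1 (ULift.up (Multiplicative.ofAdd 1))
      set c : Fin n → ℤ := fun i => Multiplicative.toAdd (f i).down with hcdef
      -- compose with ULift down
      have hdown : (MulEquiv.ulift.toMonoidHom.comp (FreeGroup.lift f)) =
          FreeGroup.lift (fun i => (f i).down) := by
        apply FreeGroup.ext_hom; intro i; simp; rfl
      have hdw : FreeGroup.lift (fun i => (f i).down) w = Multiplicative.ofAdd 1 := by
        rw [← hdown]
        simp only [MonoidHom.comp_apply, hf]
        rfl
      -- the lift into Multiplicative ℤ factors through expMap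
      let χ : Multiplicative (Fin n →₀ ℤ) →* Multiplicative ℤ :=
        AddMonoidHom.toMultiplicative (Finsupp.liftAddHom fun i => zmultiplesHom ℤ (c i))
      have hχ : χ.comp (expMap n) = FreeGroup.lift (fun i => (f i).down) := by
        apply FreeGroup.ext_hom
        intro i
        simp [χ, expMap_of, AddMonoidHom.toMultiplicative, hcdef]
      have hdw2 : χ (expMap n w) = Multiplicative.ofAdd 1 := by
        rw [← hdw, ← hχ]; rfl
      have hsum : Finsupp.sum (Multiplicative.toAdd (expMap n w)) (fun i k => k • c i) = 1 := by
        have h3 := congrArg Multiplicative.toAdd hdw2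
        simp [χ, AddMonoidHom.toMultiplicative, Finsupp.liftAddHom_apply,
          zmultiplesHom_apply] at h3
        rw [← h3]; rfl
      have hdvd : Finset.gcd Finset.univ e ∣ 1 := by
        rw [← hsum]
        refine Finset.dvd_sum fun i _ => ?_
        have : Finset.gcd Finset.univ e ∣ e i := Finset.gcd_dvd (Finset.mem_univ i)
        simpa [he, smul_eq_mul] using this.mul_right (c i)
      rcases Int.isUnit_iff.mp (isUnit_of_dvd_one hdvd) with h1 | h1
      · exact h1
      · exfalso
        have h2 := Finset.normalize_gcd (s := (Finset.univ : Finset (Fin n))) (f := e)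
        rw [h1, ← Int.abs_eq_normalize] at h2
        norm_num at h2
    · -- membership in commutator
      apply mem_commutator_of_expMap_eq_one
      rw [map_mul, map_inv]
      suffices hsv : expMap n (((List.finRange n).map fun i => FreeGroup.of i ^ e i).prod)
          = expMap n w by rw [hsv]; simp
      have : expMap n (((List.finRange n).map fun i => FreeGroup.of i ^ e i).prod)
          = ∏ i : Fin n, Multiplicative.ofAdd (Finsupp.single i (e i)) := by
        rw [Fin.prod_univ_def, map_list_prod, List.map_map]
        congr 1
        refine List.map_congr_left fun i _ => ?_
        simp only [Function.comp_apply, map_zpow, expMap_of, ← ofAdd_zsmul,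
          Finsupp.smul_single, smul_eq_mul, mul_one]
      rw [this, ← ofAdd_sum]
      have hsingle : ∑ i : Fin n, Finsupp.single i (e i) = Multiplicative.toAdd (expMap n w) := by
        ext j
        rw [Finset.sum_apply']
        simp [Finsupp.single_apply, he]
      rw [hsingle]
      rfl
  · rintro ⟨e, hgcd, hcomm⟩
    intro G _
    rw [Set.eq_univ_iff_forall]
    intro g
    obtain ⟨c, hc⟩ := exists_bezout (Finset.univ : Finset (Fin n)) e
    rw [hgcd] at hc
    refine ⟨fun i => g ^ c i, ?_⟩
    -- factor through Multiplicative ℤ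
    let θ : Multiplicative ℤ →* G := zpowersHom G g
    have hfac : θ.comp (FreeGroup.lift fun i => Multiplicative.ofAdd (c i)) =
        FreeGroup.lift fun i => g ^ c i := by
      apply FreeGroup.ext_hom
      intro i
      simp [θ, zpowersHom_apply]
    set v := ((List.finRange n).map fun i => FreeGroup.of i ^ e i).prod with hv
    have hker : FreeGroup.lift (fun i => Multiplicative.ofAdd (c i)) (v⁻¹ * w) = 1 :=
      Abelianization.commutator_subset_ker _ hcomm
    have hvval : FreeGroup.lift (fun i => Multiplicative.ofAdd (c i)) v =
        Multiplicative.ofAdd 1 := by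
      rw [hv, map_list_prod, List.map_map]
      have : ((List.finRange n).map
          ((FreeGroup.lift fun i => Multiplicative.ofAdd (c i)) ∘ fun i =>
            FreeGroup.of i ^ e i)).prod
          = ∏ i : Fin n, Multiplicative.ofAdd (e i * c i) := by
        rw [Fin.prod_univ_def]
        congr 1
        refine List.map_congr_left fun i _ => ?_
        simp only [Function.comp_apply, map_zpow, FreeGroup.lift_apply_of, ← ofAdd_zsmul,
          smul_eq_mul]
      rw [this, ← ofAdd_sum]
      congr 1
      rw [← hc]
      exact Finset.sum_congr rfl fun i _ => mul_comm _ _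
    have hwval : FreeGroup.lift (fun i => Multiplicative.ofAdd (c i)) w =
        Multiplicative.ofAdd 1 := by
      have : FreeGroup.lift (fun i => Multiplicative.ofAdd (c i)) w =
          FreeGroup.lift (fun i => Multiplicative.ofAdd (c i)) v *
          FreeGroup.lift (fun i => Multiplicative.ofAdd (c i)) (v⁻¹ * w) := by
        rw [← map_mul]; group
      rw [this, hker, hvval, mul_one]
    calc FreeGroup.lift (fun i => g ^ c i) w
        = θ (FreeGroup.lift (fun i => Multiplicative.ofAdd (c i)) w) := by
          rw [← hfac]; rfl
      _ = g := by rw [hwval, zpowersHom_apply]; simp
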